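/- Let Ω ⊂ ℝⁿ be open, v ∈ C³(Ω), ξ ∈ C¹(Ω), and set Φ := ξ ∇v. Then on Ω: 2 ∇v · (DΦ)² ∇v − 2 (∇v · DΦ ∇v) div Φ = div[ ξ² ( (1/2) |∇v|² ∇(|∇v|²) − |∇v|² Δv ∇v ) ] + |∇v|² ( (Δv)² − |D²v|² ) ξ², where |D²v|² = ∑_{i,j} (∂_{ij} v)² is the squared Frobenius norm of the Hessian. -/

import Mathlib

/-- The partial derivative `∂_i f` of a function on `ℝⁿ`. -/
noncomputable def pd {n : ℕ} (i : Fin n) (f : (Fin n → ℝ) → ℝ) (x : Fin n → ℝ) : ℝ :=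
  fderiv ℝ f x (Pi.single i 1)

/-- The gradient `∇f` of a function on `ℝⁿ`, in coordinates. -/
noncomputable def gradv {n : ℕ} (f : (Fin n → ℝ) → ℝ) (x : Fin n → ℝ) : Fin n → ℝ :=
  fun i => pd i f x

/-- The divergence `div F = ∑ᵢ ∂_i F^i` of a vector field on `ℝⁿ`. -/
noncomputable def vdiv {n : ℕ} (F : (Fin n → ℝ) → (Fin n → ℝ)) (x : Fin n → ℝ) : ℝ :=
  ∑ i : Fin n, pd i (fun y => F y i) x

/-- The squared norm of the gradient, `|∇f|² = ∑ᵢ (∂_i f)²`. -/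
noncomputable def nsq {n : ℕ} (f : (Fin n → ℝ) → ℝ) (x : Fin n → ℝ) : ℝ :=
  ∑ i : Fin n, (pd i f x) ^ 2

/-- The Laplacian `Δf = ∑ᵢ ∂_{ii} f`. -/
noncomputable def lapp {n : ℕ} (f : (Fin n → ℝ) → ℝ) (x : Fin n → ℝ) : ℝ :=
  ∑ i : Fin n, pd i (fun y => pd i f y) x

variable {n : ℕ}

lemma pd_congr_nhds {f g : (Fin n → ℝ) → ℝ} {x : Fin n → ℝ} (i : Fin n)
    (h : f =ᶠ[nhds x] g) : pd i f x = pd i g x := by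
  unfold pd; rw [h.fderiv_eq]

lemma contDiffOn_pd {Ω : Set (Fin n → ℝ)} (hΩ : IsOpen Ω) {f : (Fin n → ℝ) → ℝ}
    {m k : WithTop ℕ∞} (hf : ContDiffOn ℝ k f Ω) (h : m + 1 ≤ k) (i : Fin n) :
    ContDiffOn ℝ m (fun y => pd i f y) Ω :=
  (hf.fderiv_of_isOpen hΩ h).clm_apply contDiffOn_const

lemma pd_swap {f : (Fin n → ℝ) → ℝ} {x : Fin n → ℝ} (hf : ContDiffAt ℝ 2 f x) (i j : Fin n) :
    pd i (fun y => pd j f y) x = pd j (fun y => pd i f y) x := by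
  have hdiff : DifferentiableAt ℝ (fderiv ℝ f) x :=
    (hf.fderiv_right (m := 1) le_rfl).differentiableAt one_ne_zero
  have key : ∀ a b : Fin n, pd a (fun y => pd b f y) x
      = fderiv ℝ (fderiv ℝ f) x (Pi.single a 1) (Pi.single b 1) := by
    intro a b
    unfold pd
    rw [fderiv_clm_apply hdiff (differentiableAt_const _)]
    simp
  rw [key, key, (hf.isSymmSndFDerivAt (by norm_num)).eq]

lemma pd_mul {f g : (Fin n → ℝ) → ℝ} {x : Fin n → ℝ} (i : Fin n)
    (hf : DifferentiableAt ℝ f x) (hg : DifferentiableAt ℝ g x) :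
    pd i (fun y => f y * g y) x = pd i f x * g x + f x * pd i g x := by
  unfold pd
  rw [fderiv_fun_mul hf hg]
  simp [mul_comm]
  ring

lemma pd_sum {ι : Type*} (s : Finset ι) (f : ι → (Fin n → ℝ) → ℝ) (i : Fin n) (x : Fin n → ℝ)
    (h : ∀ j ∈ s, DifferentiableAt ℝ (f j) x) :
    pd i (fun y => ∑ j ∈ s, f j y) x = ∑ j ∈ s, pd i (f j) x := by
  unfold pd
  rw [fderiv_fun_sum h]
  simp

lemma pd_sub {f g : (Fin n → ℝ) → ℝ} {x : Fin n → ℝ} (i : Fin n)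
    (hf : DifferentiableAt ℝ f x) (hg : DifferentiableAt ℝ g x) :
    pd i (fun y => f y - g y) x = pd i f x - pd i g x := by
  unfold pd
  rw [fderiv_fun_sub hf hg]; simp

lemma pd_sq {f : (Fin n → ℝ) → ℝ} {x : Fin n → ℝ} (i : Fin n)
    (hf : DifferentiableAt ℝ f x) :
    pd i (fun y => f y ^ 2) x = 2 * f x * pd i f x := by
  have h1 : (fun y => f y ^ 2) = fun y => f y * f y := by ext y; ring
  rw [h1, pd_mul i hf hf]; ring

lemma pd_const_mul {f : (Fin n → ℝ) → ℝ} {x : Fin n → ℝ} (i : Fin n) (c : ℝ)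
    (hf : DifferentiableAt ℝ f x) :
    pd i (fun y => c * f y) x = c * pd i f x := by
  unfold pd
  rw [fderiv_const_mul hf]
  simp

lemma key_algebra {m : ℕ} (A t : Fin m → ℝ) (B : Fin m → Fin m → ℝ)
    (Cc : Fin m → Fin m → Fin m → ℝ) (s : ℝ)
    (hB : ∀ i j, B i j = B j i) (hC : ∀ j k, Cc j j k = Cc k j j) :
    2 * (∑ i, ∑ l, ∑ j, A i * (t l * A i + s * B l i) * (t j * A l + s * B j l) * A j)
      - 2 * (∑ i, ∑ j, A i * (t j * A i + s * B j i) * A j) * (∑ i, (t i * A i + s * B i i))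
    = (∑ j, (2 * s * t j * ((1/2 : ℝ) * ((∑ i, A i ^ 2) * (∑ k, 2 * A k * B j k))
            - (∑ i, A i ^ 2) * (∑ i, B i i) * A j)
        + s ^ 2 * ((1/2 : ℝ) * ((∑ k, 2 * A k * B j k) * (∑ k, 2 * A k * B j k)
              + (∑ i, A i ^ 2) * (∑ k, (2 * B j k * B j k + 2 * A k * Cc j j k)))
          - (((∑ k, 2 * A k * B j k) * (∑ i, B i i) + (∑ i, A i ^ 2) * (∑ i, Cc j i i)) * A j
            + (∑ i, A i ^ 2) * (∑ i, B i i) * B j j))))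
      + (∑ i, A i ^ 2) * ((∑ i, B i i) ^ 2 - ∑ i, ∑ j, (B i j) ^ 2) * s ^ 2 := by
  -- names
  have hX : (∑ i, ∑ l, ∑ j, A i * (t l * A i + s * B l i) * (t j * A l + s * B j l) * A j)
      = (∑ i, t i * A i) * (∑ i, t i * A i) * (∑ i, A i ^ 2)
        + s * (∑ l, ∑ j, t l * (A j * B j l)) * (∑ i, A i ^ 2)
        + s * (∑ i, t i * A i) * (∑ i, ∑ l, A i * (A l * B l i))
        + s ^ 2 * (∑ i, ∑ l, ∑ j, A i * B l i * (B j l * A j)) := by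
    simp only [Finset.mul_sum, Finset.sum_mul, mul_add, add_mul]
    simp only [← Finset.sum_add_distrib]
    refine Finset.sum_congr rfl fun i _ => ?_
    refine Finset.sum_congr rfl fun l _ => ?_
    refine Finset.sum_congr rfl fun j _ => ?_
    ring
  have hD : (∑ i, ∑ j, A i * (t j * A i + s * B j i) * A j)
      = (∑ i, t i * A i) * (∑ i, A i ^ 2) + s * (∑ i, ∑ j, A i * (B j i * A j)) := by
    simp only [Finset.mul_sum, Finset.sum_mul, mul_add, add_mul]
    simp only [← Finset.sum_add_distrib]
    refine Finset.sum_congr rfl fun i _ => ?_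
    refine Finset.sum_congr rfl fun j _ => ?_
    ring
  have hV : (∑ i, (t i * A i + s * B i i)) = (∑ i, t i * A i) + s * (∑ i, B i i) := by
    simp only [Finset.mul_sum, Finset.sum_add_distrib]
  have hj : ∀ j : Fin m,
      (2 * s * t j * ((1/2 : ℝ) * ((∑ i, A i ^ 2) * (∑ k, 2 * A k * B j k))
            - (∑ i, A i ^ 2) * (∑ i, B i i) * A j)
        + s ^ 2 * ((1/2 : ℝ) * ((∑ k, 2 * A k * B j k) * (∑ k, 2 * A k * B j k)
              + (∑ i, A i ^ 2) * (∑ k, (2 * B j k * B j k + 2 * A k * Cc j j k)))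
          - (((∑ k, 2 * A k * B j k) * (∑ i, B i i) + (∑ i, A i ^ 2) * (∑ i, Cc j i i)) * A j
            + (∑ i, A i ^ 2) * (∑ i, B i i) * B j j)))
      = 2 * s * ((∑ i, A i ^ 2) * (t j * (∑ k, A k * B j k)))
        - 2 * s * ((∑ i, A i ^ 2) * ((∑ i, B i i) * (t j * A j)))
        + 2 * (s ^ 2 * ((∑ k, A k * B j k) * (∑ k, A k * B j k)))
        + s ^ 2 * ((∑ i, A i ^ 2) * (∑ k, B j k * B j k))
        + s ^ 2 * ((∑ i, A i ^ 2) * (∑ k, A k * Cc j j k))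
        - 2 * (s ^ 2 * ((A j * (∑ k, A k * B j k)) * (∑ i, B i i)))
        - s ^ 2 * ((∑ i, A i ^ 2) * (A j * (∑ i, Cc j i i)))
        - s ^ 2 * ((∑ i, A i ^ 2) * ((∑ i, B i i) * B j j)) := by
    intro j
    simp only [Finset.mul_sum, Finset.sum_mul, mul_add, add_mul, mul_sub, sub_mul]
    simp only [← Finset.sum_add_distrib, ← Finset.sum_sub_distrib]
    refine Finset.sum_congr rfl fun a _ => ?_
    refine Finset.sum_congr rfl fun b _ => ?_
    ring
  have hassemble : (∑ j, (2 * s * ((∑ i, A i ^ 2) * (t j * (∑ k, A k * B j k)))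
        - 2 * s * ((∑ i, A i ^ 2) * ((∑ i, B i i) * (t j * A j)))
        + 2 * (s ^ 2 * ((∑ k, A k * B j k) * (∑ k, A k * B j k)))
        + s ^ 2 * ((∑ i, A i ^ 2) * (∑ k, B j k * B j k))
        + s ^ 2 * ((∑ i, A i ^ 2) * (∑ k, A k * Cc j j k))
        - 2 * (s ^ 2 * ((A j * (∑ k, A k * B j k)) * (∑ i, B i i)))
        - s ^ 2 * ((∑ i, A i ^ 2) * (A j * (∑ i, Cc j i i)))
        - s ^ 2 * ((∑ i, A i ^ 2) * ((∑ i, B i i) * B j j))))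
      = 2 * s * ((∑ i, A i ^ 2) * (∑ j, t j * (∑ k, A k * B j k)))
        - 2 * s * ((∑ i, A i ^ 2) * ((∑ i, B i i) * (∑ j, t j * A j)))
        + 2 * (s ^ 2 * (∑ j, (∑ k, A k * B j k) * (∑ k, A k * B j k)))
        + s ^ 2 * ((∑ i, A i ^ 2) * (∑ j, ∑ k, B j k * B j k))
        + s ^ 2 * ((∑ i, A i ^ 2) * (∑ j, ∑ k, A k * Cc j j k))
        - 2 * (s ^ 2 * ((∑ j, A j * (∑ k, A k * B j k)) * (∑ i, B i i)))
        - s ^ 2 * ((∑ i, A i ^ 2) * (∑ j, A j * (∑ i, Cc j i i)))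
        - s ^ 2 * ((∑ i, A i ^ 2) * ((∑ i, B i i) * (∑ j, B j j))) := by
    simp only [Finset.sum_add_distrib, Finset.sum_sub_distrib, ← Finset.mul_sum,
      ← Finset.sum_mul]
  have rT : (∑ l, ∑ j, t l * (A j * B j l)) = ∑ j, t j * (∑ k, A k * B j k) := by
    refine Finset.sum_congr rfl fun l _ => ?_
    rw [Finset.mul_sum]
    exact Finset.sum_congr rfl fun j _ => by rw [hB j l]
  have rR1 : (∑ i, ∑ l, A i * (A l * B l i)) = ∑ j, A j * (∑ k, A k * B j k) := by
    refine Finset.sum_congr rfl fun i _ => ?_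
    rw [Finset.mul_sum]
    exact Finset.sum_congr rfl fun l _ => by rw [hB l i]
  have rR2 : (∑ i, ∑ j, A i * (B j i * A j)) = ∑ j, A j * (∑ k, A k * B j k) := by
    refine Finset.sum_congr rfl fun i _ => ?_
    rw [Finset.mul_sum]
    refine Finset.sum_congr rfl fun l _ => ?_
    rw [hB l i]; ring
  have rM : (∑ i, ∑ l, ∑ j, A i * B l i * (B j l * A j))
      = ∑ j, (∑ k, A k * B j k) * (∑ k, A k * B j k) := by
    rw [Finset.sum_comm]
    refine Finset.sum_congr rfl fun l _ => ?_
    rw [Finset.sum_mul_sum]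
    refine Finset.sum_congr rfl fun i _ => ?_
    refine Finset.sum_congr rfl fun j _ => ?_
    rw [hB j l]; ring
  have rU : (∑ j : Fin m, ∑ k : Fin m, B j k * B j k) = ∑ i, ∑ j, B i j ^ 2 :=
    Finset.sum_congr rfl fun i _ => Finset.sum_congr rfl fun j _ => (pow_two (B i j)).symm
  have rΘ : (∑ j, ∑ k, A k * Cc j j k) = ∑ j, A j * (∑ i, Cc j i i) := by
    have step1 : (∑ j, ∑ k, A k * Cc j j k) = ∑ j, ∑ k, A k * Cc k j j :=
      Finset.sum_congr rfl fun j _ => Finset.sum_congr rfl fun k _ => by rw [hC j k]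
    rw [step1, Finset.sum_comm]
    refine Finset.sum_congr rfl fun k _ => ?_
    rw [Finset.mul_sum]
  rw [hX, hD, hV, Finset.sum_congr rfl fun j _ => hj j, hassemble, rT, rR1, rR2, rM, rU, rΘ]
  ring

/-- For `v ∈ C³(Ω)`, `ξ ∈ C¹(Ω)` and `Φ := ξ ∇v`, on `Ω` one has
`2 ∇v·(DΦ)²∇v − 2 (∇v·DΦ∇v) div Φ
  = div[ ξ² ( ½ |∇v|² ∇(|∇v|²) − |∇v|² Δv ∇v ) ] + |∇v|² ((Δv)² − |D²v|²) ξ²`. -/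
theorem third_term_identity {n : ℕ} (Ω : Set (Fin n → ℝ)) (hΩ : IsOpen Ω)
    (v ξ : (Fin n → ℝ) → ℝ) (hv : ContDiffOn ℝ 3 v Ω) (hξ : ContDiffOn ℝ 1 ξ Ω)
    (Φ : (Fin n → ℝ) → (Fin n → ℝ)) (hΦ : Φ = fun x => ξ x • gradv v x) :
    ∀ x ∈ Ω,
      2 * (∑ i : Fin n, ∑ l : Fin n, ∑ j : Fin n,
            pd i v x * pd l (fun y => Φ y i) x * pd j (fun y => Φ y l) x * pd j v x)
        - 2 * (∑ i : Fin n, ∑ j : Fin n,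
            pd i v x * pd j (fun y => Φ y i) x * pd j v x) * vdiv Φ x
      = vdiv (fun y => (ξ y) ^ 2 •
            ((1 / 2 : ℝ) • (nsq v y • gradv (nsq v) y)
              - (nsq v y * lapp v y) • gradv v y)) x
        + nsq v x * ((lapp v x) ^ 2
            - ∑ i : Fin n, ∑ j : Fin n, (pd i (fun y => pd j v y) x) ^ 2) * (ξ x) ^ 2 := by
  intro x hx
  -- basic differentiability
  have c2 : ∀ k : Fin n, ContDiffOn ℝ 2 (fun y => pd k v y) Ω :=
    fun k => contDiffOn_pd hΩ hv (by norm_num) k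
  have c1 : ∀ j k : Fin n, ContDiffOn ℝ 1 (fun y => pd j (fun z => pd k v z) y) Ω :=
    fun j k => contDiffOn_pd hΩ (c2 k) (by norm_num) j
  have dAt : ∀ {f : (Fin n → ℝ) → ℝ}, ContDiffOn ℝ 1 f Ω → ∀ y ∈ Ω, DifferentiableAt ℝ f y :=
    fun hf y hy => ((hf.differentiableOn one_ne_zero) y hy).differentiableAt (hΩ.mem_nhds hy)
  have dξ : ∀ y ∈ Ω, DifferentiableAt ℝ ξ y := dAt hξ
  have dv : ∀ (k : Fin n), ∀ y ∈ Ω, DifferentiableAt ℝ (fun z => pd k v z) y :=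
    fun k => dAt ((c2 k).of_le (by norm_num))
  have dv2 : ∀ (j k : Fin n), ∀ y ∈ Ω,
      DifferentiableAt ℝ (fun z => pd j (fun w => pd k v w) z) y :=
    fun j k => dAt (c1 j k)
  -- components of Φ
  have hΦi : ∀ i : Fin n, (fun y => Φ y i) = fun y => ξ y * pd i v y := by
    intro i; funext y; rw [hΦ]; simp [gradv]
  have hΦd : ∀ i l : Fin n, pd l (fun y => Φ y i) x
      = pd l ξ x * pd i v x + ξ x * pd l (fun z => pd i v z) x := by
    intro i l
    rw [hΦi i]
    exact pd_mul l (dξ x hx) (dv i x hx)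
  have hdiv : vdiv Φ x = ∑ i : Fin n, (pd i ξ x * pd i v x + ξ x * pd i (fun z => pd i v z) x) := by
    unfold vdiv
    exact Finset.sum_congr rfl fun i _ => hΦd i i
  -- nsq and its derivative
  have hnsq : nsq v = fun y => ∑ k : Fin n, (pd k v y) ^ 2 := rfl
  have hlapp : lapp v = fun y => ∑ i : Fin n, pd i (fun z => pd i v z) y := rfl
  have hNs : ∀ (j : Fin n), ∀ y ∈ Ω,
      pd j (nsq v) y = ∑ k : Fin n, 2 * pd k v y * pd j (fun z => pd k v z) y := by
    intro j y hy
    rw [hnsq, pd_sum Finset.univ (fun k z => (pd k v z) ^ 2) j y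
      (fun k _ => (dv k y hy).pow 2)]
    exact Finset.sum_congr rfl fun k _ => pd_sq j (dv k y hy)
  -- the RHS vector field, componentwise
  have hGcomp : ∀ j : Fin n, ∀ y ∈ Ω,
      ((ξ y) ^ 2 • ((1 / 2 : ℝ) • (nsq v y • gradv (nsq v) y)
        - (nsq v y * lapp v y) • gradv v y)) j
      = ξ y ^ 2 * ((1/2 : ℝ) * (nsq v y * (∑ k : Fin n, 2 * pd k v y * pd j (fun z => pd k v z) y))
          - (nsq v y * lapp v y) * pd j v y) := by
    intro j y hy
    simp only [Pi.smul_apply, Pi.sub_apply, smul_eq_mul, gradv]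
    rw [hNs j y hy]
  -- differentiability at x of the building blocks
  have dQ : DifferentiableAt ℝ (nsq v) x := by
    rw [hnsq]
    exact DifferentiableAt.fun_sum fun k _ => (dv k x hx).pow 2
  have dΛ : DifferentiableAt ℝ (lapp v) x := by
    rw [hlapp]
    exact DifferentiableAt.fun_sum fun i _ => dv2 i i x hx
  have dH : ∀ j : Fin n, DifferentiableAt ℝ
      (fun y => ∑ k : Fin n, 2 * pd k v y * pd j (fun z => pd k v z) y) x :=
    fun j => DifferentiableAt.fun_sum fun k _ =>
      (((dv k x hx).const_mul 2).mul (dv2 j k x hx))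
  -- derivative of each component of the RHS field at x
  have eG : ∀ j : Fin n, pd j (fun y =>
      ((ξ y) ^ 2 • ((1 / 2 : ℝ) • (nsq v y • gradv (nsq v) y)
        - (nsq v y * lapp v y) • gradv v y)) j) x
      = 2 * ξ x * pd j ξ x * ((1/2 : ℝ) * (nsq v x * (∑ k : Fin n, 2 * pd k v x * pd j (fun z => pd k v z) x))
          - (nsq v x * lapp v x) * pd j v x)
        + ξ x ^ 2 * ((1/2 : ℝ) * ((∑ k : Fin n, 2 * pd k v x * pd j (fun z => pd k v z) x)
              * (∑ k : Fin n, 2 * pd k v x * pd j (fun z => pd k v z) x)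
            + nsq v x * (∑ k : Fin n, (2 * pd j (fun z => pd k v z) x * pd j (fun z => pd k v z) x
                + 2 * pd k v x * pd j (fun y => pd j (fun z => pd k v z) y) x)))
          - (((∑ k : Fin n, 2 * pd k v x * pd j (fun z => pd k v z) x) * lapp v x
              + nsq v x * (∑ i : Fin n, pd j (fun y => pd i (fun z => pd i v z) y) x)) * pd j v x
            + (nsq v x * lapp v x) * pd j (fun z => pd j v z) x)) := by
    intro j
    have heq : (fun y => ((ξ y) ^ 2 • ((1 / 2 : ℝ) • (nsq v y • gradv (nsq v) y)
        - (nsq v y * lapp v y) • gradv v y)) j)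
        =ᶠ[nhds x] (fun y => ξ y ^ 2 * ((1/2 : ℝ) * (nsq v y
            * (∑ k : Fin n, 2 * pd k v y * pd j (fun z => pd k v z) y))
          - (nsq v y * lapp v y) * pd j v y)) := by
      filter_upwards [hΩ.mem_nhds hx] with y hy
      exact hGcomp j y hy
    rw [pd_congr_nhds j heq]
    -- now differentiate the nice expression
    have dW : DifferentiableAt ℝ (fun y => (1/2 : ℝ) * (nsq v y
        * (∑ k : Fin n, 2 * pd k v y * pd j (fun z => pd k v z) y))
        - (nsq v y * lapp v y) * pd j v y) x :=
      ((dQ.mul (dH j)).const_mul _).sub ((dQ.mul dΛ).mul (dv j x hx))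
    rw [pd_mul j ((dξ x hx).fun_pow 2) dW, pd_sq j (dξ x hx),
      pd_sub j ((dQ.fun_mul (dH j)).const_mul _) ((dQ.fun_mul dΛ).fun_mul (dv j x hx)),
      pd_const_mul j _ (dQ.fun_mul (dH j)), pd_mul j dQ (dH j),
      pd_mul j (dQ.fun_mul dΛ) (dv j x hx), pd_mul j dQ dΛ,
      hNs j x hx]
    have eHd : pd j (fun y => ∑ k : Fin n, 2 * pd k v y * pd j (fun z => pd k v z) y) x
        = ∑ k : Fin n, (2 * pd j (fun z => pd k v z) x * pd j (fun z => pd k v z) x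
            + 2 * pd k v x * pd j (fun y => pd j (fun z => pd k v z) y) x) := by
      rw [pd_sum Finset.univ (fun k y => 2 * pd k v y * pd j (fun z => pd k v z) y) j x
        (fun k _ => ((dv k x hx).const_mul 2).mul (dv2 j k x hx))]
      refine Finset.sum_congr rfl fun k _ => ?_
      rw [pd_mul j ((dv k x hx).const_mul 2) (dv2 j k x hx), pd_const_mul j 2 (dv k x hx)]
    have eLd : pd j (lapp v) x = ∑ i : Fin n, pd j (fun y => pd i (fun z => pd i v z) y) x := by
      rw [hlapp, pd_sum Finset.univ (fun i y => pd i (fun z => pd i v z) y) j x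
        (fun i _ => dv2 i i x hx)]
    rw [eHd, eLd]
  -- symmetry of second derivatives
  have hB : ∀ i j : Fin n, pd i (fun z => pd j v z) x = pd j (fun z => pd i v z) x :=
    fun i j => pd_swap ((hv.contDiffAt (hΩ.mem_nhds hx)).of_le (by norm_num)) i j
  -- third-derivative symmetry
  have hC : ∀ j k : Fin n, pd j (fun y => pd j (fun z => pd k v z) y) x
      = pd k (fun y => pd j (fun z => pd j v z) y) x := by
    intro j k
    have h1 : (fun y => pd j (fun z => pd k v z) y) =ᶠ[nhds x]
        (fun y => pd k (fun z => pd j v z) y) := by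
      filter_upwards [hΩ.mem_nhds hx] with y hy
      exact pd_swap ((hv.contDiffAt (hΩ.mem_nhds hy)).of_le (by norm_num)) j k
    rw [pd_congr_nhds j h1]
    exact pd_swap ((c2 j).contDiffAt (hΩ.mem_nhds hx)) j k
  -- reduce the goal to algebra
  simp only [hΦd, hdiv, vdiv, eG]
  simp only [hnsq, hlapp]
  exact key_algebra (fun i => pd i v x) (fun i => pd i ξ x)
    (fun a b => pd a (fun z => pd b v z) x)
    (fun a b c => pd a (fun y => pd b (fun z => pd c v z) y) x) (ξ x) hB hC
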